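/- Let T be a bounded linear operator on a complex Hilbert space H. Then for all vectors x, y ∈ H, ⟨|T| x, x⟩ + 2 Re⟨T x, y⟩ + ⟨|T*| y, y⟩ ≥ 0; that is, the 2×2 operator matrix [[|T|, T*], [T, |T*|]] acting on H ⊕ H is a positive operator, where |T| = (T*T)^{1/2}. -/

import Mathlib

set_option synthInstance.maxHeartbeats 1000000
set_option maxHeartbeats 1000000

open ContinuousLinearMap
open scoped InnerProductSpace

section Aux

variable {H : Type*} [NormedAddCommGroup H] [InnerProductSpace ℂ H] [CompleteSpace H]

theorem aux_poly_intertwine (T : H →L[ℂ] H) (q : Polynomial ℝ) :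
    T * Polynomial.aeval (adjoint T * T) q = Polynomial.aeval (T * adjoint T) q * T := by
  induction q using Polynomial.induction_on with
  | C r => simp [Algebra.algebraMap_eq_smul_one]
  | add p q hp hq => simp [mul_add, add_mul, hp, hq]
  | monomial n r hn =>
      simp only [map_mul, map_pow, Polynomial.aeval_C, Polynomial.aeval_X, pow_succ] at *
      calc T * (algebraMap ℝ _ r * ((adjoint T * T) ^ n * (adjoint T * T)))
          = (T * (algebraMap ℝ _ r * (adjoint T * T) ^ n)) * (adjoint T * T) := by noncomm_ring
        _ = (algebraMap ℝ _ r * (T * adjoint T) ^ n * T) * (adjoint T * T) := by rw [hn]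
        _ = algebraMap ℝ _ r * (T * adjoint T) ^ n * (T * adjoint T) * T := by noncomm_ring

theorem aux_cfc_intertwine (T : H →L[ℂ] H) (f : ℝ → ℝ) (hf : Continuous f) :
    T * cfc f (adjoint T * T) = cfc f (T * adjoint T) * T := by
  set A := adjoint T * T with hA
  set B := T * adjoint T with hB
  have hA0 : (0:H→L[ℂ]H) ≤ A := by rw [hA, ← star_eq_adjoint]; exact star_mul_self_nonneg T
  have hB0 : (0:H→L[ℂ]H) ≤ B := by rw [hB, ← star_eq_adjoint]; exact mul_star_self_nonneg T
  set M : ℝ := (max ‖A‖ ‖B‖) * ‖(1:H→L[ℂ]H)‖ with hM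
  have hsA : spectrum ℝ A ⊆ Set.Icc 0 M := fun z hz =>
    ⟨spectrum_nonneg_of_nonneg hA0 hz, by
      calc z = ‖z‖ := (Real.norm_of_nonneg (spectrum_nonneg_of_nonneg hA0 hz)).symm
        _ ≤ ‖A‖ * ‖(1:H→L[ℂ]H)‖ := spectrum.norm_le_norm_mul_of_mem hz
        _ ≤ M := by rw [hM]; gcongr; exact le_max_left _ _⟩
  have hsB : spectrum ℝ B ⊆ Set.Icc 0 M := fun z hz =>
    ⟨spectrum_nonneg_of_nonneg hB0 hz, by
      calc z = ‖z‖ := (Real.norm_of_nonneg (spectrum_nonneg_of_nonneg hB0 hz)).symm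
        _ ≤ ‖B‖ * ‖(1:H→L[ℂ]H)‖ := spectrum.norm_le_norm_mul_of_mem hz
        _ ≤ M := by rw [hM]; gcongr; exact le_max_right _ _⟩
  have hAsa : IsSelfAdjoint A := IsSelfAdjoint.of_nonneg hA0
  have hBsa : IsSelfAdjoint B := IsSelfAdjoint.of_nonneg hB0
  have key : ∀ ε > (0:ℝ), ‖T * cfc f A - cfc f B * T‖ ≤ ε * (2 * ‖T‖) := by
    intro ε hε
    obtain ⟨p, hp⟩ := exists_polynomial_near_of_continuousOn 0 M f hf.continuousOn ε hε
    have e1 : cfc f A - Polynomial.aeval A p = cfc (fun t => f t - p.eval t) A := by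
      rw [← cfc_polynomial (R := ℝ) p A hAsa, ← cfc_sub f p.eval A (hf.continuousOn) (Polynomial.continuousOn _)]
    have e2 : cfc f B - Polynomial.aeval B p = cfc (fun t => f t - p.eval t) B := by
      rw [← cfc_polynomial (R := ℝ) p B hBsa, ← cfc_sub f p.eval B (hf.continuousOn) (Polynomial.continuousOn _)]
    have n1 : ‖cfc f A - Polynomial.aeval A p‖ ≤ ε := by
      rw [e1]
      exact norm_cfc_le hε.le fun x hx => by
        rw [Real.norm_eq_abs, abs_sub_comm]; exact (hp x (hsA hx)).le
    have n2 : ‖cfc f B - Polynomial.aeval B p‖ ≤ ε := by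
      rw [e2]
      exact norm_cfc_le hε.le fun x hx => by
        rw [Real.norm_eq_abs, abs_sub_comm]; exact (hp x (hsB hx)).le
    have deco : T * cfc f A - cfc f B * T
        = T * (cfc f A - Polynomial.aeval A p) - (cfc f B - Polynomial.aeval B p) * T := by
      rw [mul_sub, sub_mul, aux_poly_intertwine T p]; abel
    calc ‖T * cfc f A - cfc f B * T‖
        ≤ ‖T * (cfc f A - Polynomial.aeval A p)‖ + ‖(cfc f B - Polynomial.aeval B p) * T‖ := by
          rw [deco]; exact norm_sub_le _ _
      _ ≤ ‖T‖ * ε + ε * ‖T‖ := by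
          gcongr
          · exact (norm_mul_le _ _).trans (by gcongr)
          · exact (norm_mul_le _ _).trans (by gcongr)
      _ = ε * (2 * ‖T‖) := by ring
  have : ‖T * cfc f A - cfc f B * T‖ ≤ 0 := by
    by_contra h
    push_neg at h
    have h2 := key (‖T * cfc f A - cfc f B * T‖ / (2 * ‖T‖ + 1)) (by positivity)
    rw [div_mul_eq_mul_div, le_div_iff₀ (by positivity)] at h2
    nlinarith [norm_nonneg T]
  have := le_antisymm this (norm_nonneg _)
  rwa [norm_eq_zero, sub_eq_zero] at this

theorem aux_sqrt_eq_real_cfc {S : H →L[ℂ] H} (hS : 0 ≤ S) :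
    CFC.sqrt S = cfc Real.sqrt S := by
  rw [CFC.sqrt_eq_cfc, cfc_nnreal_eq_real _ S hS]
  exact cfc_congr fun t _ => by
    rw [Real.sqrt]

theorem aux_inner_re_mono {P Q : H →L[ℂ] H} (h : P ≤ Q) (z : H) :
    (⟪P z, z⟫_ℂ).re ≤ (⟪Q z, z⟫_ℂ).re := by
  have h0 := ((le_def P Q).mp h).inner_nonneg_left z
  rw [sub_apply, inner_sub_left] at h0
  have h1 := (Complex.le_def.mp h0).1
  simp only [Complex.zero_re, Complex.sub_re] at h1
  linarith

theorem aux_key_ineq (T : H →L[ℂ] H) (x y : H) {ε : ℝ} (hε : 0 < ε) :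
    ‖(⟪T x, y⟫_ℂ)‖ ^ 2 ≤ ((⟪CFC.sqrt (adjoint T * T) x, x⟫_ℂ).re + Real.sqrt ε * ‖x‖ ^ 2) *
      (⟪CFC.sqrt (T * adjoint T) y, y⟫_ℂ).re := by
  set A := adjoint T * T with hA
  set B := T * adjoint T with hB
  have hA0 : (0:H→L[ℂ]H) ≤ A := by rw [hA, ← star_eq_adjoint]; exact star_mul_self_nonneg T
  have hB0 : (0:H→L[ℂ]H) ≤ B := by rw [hB, ← star_eq_adjoint]; exact mul_star_self_nonneg T
  have hAsa : IsSelfAdjoint A := IsSelfAdjoint.of_nonneg hA0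
  have hBsa : IsSelfAdjoint B := IsSelfAdjoint.of_nonneg hB0
  set g : ℝ → ℝ := fun t => (max t 0 + ε) ^ ((4:ℝ)⁻¹) with hgdef
  have hbase : ∀ t : ℝ, 0 < max t 0 + ε := fun t => by positivity
  have hgpos : ∀ t, 0 < g t := fun t => Real.rpow_pos_of_pos (hbase t) _
  set f : ℝ → ℝ := fun t => (g t)⁻¹ with hfdef
  have hgc : Continuous g :=
    ((continuous_id.max continuous_const).add continuous_const).rpow_const
      (fun t => Or.inr (by norm_num))
  have hfc : Continuous f := hgc.inv₀ fun t => (hgpos t).ne'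
  set u := cfc g A x with hu
  set E := cfc f B with hE
  have hEsa : IsSelfAdjoint E := cfc_predicate f B
  have hEadj : adjoint E = E := by rw [← star_eq_adjoint]; exact hEsa
  -- step 1 : T x = E (T u)
  have h1 : cfc f A * cfc g A = 1 := by
    rw [← cfc_mul f g A hfc.continuousOn hgc.continuousOn]
    have : (fun t => f t * g t) = fun _ : ℝ => (1:ℝ) :=
      funext fun t => inv_mul_cancel₀ (hgpos t).ne'
    rw [this, cfc_const_one ℝ A]
  have hxu : cfc f A u = x := by
    rw [hu, ← ContinuousLinearMap.mul_apply, h1, ContinuousLinearMap.one_apply]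
  have step1 : T x = E (T u) := by
    conv_lhs => rw [← hxu]
    rw [← ContinuousLinearMap.mul_apply, aux_cfc_intertwine T f hfc, ContinuousLinearMap.mul_apply]
  -- step 2
  have step2 : ⟪T x, y⟫_ℂ = ⟪u, adjoint T (E y)⟫_ℂ := by
    rw [step1, ← hEadj, adjoint_inner_left, hEadj, ← adjoint_inner_right]
  -- step 3
  have step3 : ‖(⟪T x, y⟫_ℂ)‖ ≤ ‖u‖ * ‖adjoint T (E y)‖ := by
    rw [step2]; exact norm_inner_le_norm _ _
  have hSsym : (cfc g A : H →L[ℂ] H).IsSymmetric :=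
    isSelfAdjoint_iff_isSymmetric.mp (cfc_predicate g A)
  have hEsym : (E : H →L[ℂ] H).IsSymmetric := isSelfAdjoint_iff_isSymmetric.mp hEsa
  -- step 4 : ‖u‖^2
  have step4 : ‖u‖ ^ 2 = (⟪cfc (fun t => g t * g t) A x, x⟫_ℂ).re := by
    have e : ⟪cfc (fun t => g t * g t) A x, x⟫_ℂ = ⟪u, u⟫_ℂ := by
      rw [cfc_mul g g A hgc.continuousOn hgc.continuousOn, ContinuousLinearMap.mul_apply, hu]
      exact hSsym (cfc g A x) x
    rw [e, ← RCLike.re_to_complex, @inner_self_eq_norm_sq ℂ]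
  -- step 5 : bound ‖u‖^2
  have sqrt_add_le : ∀ t : ℝ, 0 ≤ t → Real.sqrt (t + ε) ≤ Real.sqrt t + Real.sqrt ε := by
    intro t ht
    have h2 : t + ε ≤ (Real.sqrt t + Real.sqrt ε) ^ 2 := by
      nlinarith [Real.sq_sqrt ht, Real.sq_sqrt hε.le, Real.sqrt_nonneg t, Real.sqrt_nonneg ε]
    calc Real.sqrt (t + ε) ≤ Real.sqrt ((Real.sqrt t + Real.sqrt ε) ^ 2) := Real.sqrt_le_sqrt h2
      _ = Real.sqrt t + Real.sqrt ε := Real.sqrt_sq (by positivity)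
  have hgg : ∀ t : ℝ, 0 ≤ t → g t * g t = Real.sqrt (t + ε) := by
    intro t ht
    have hm : max t 0 = t := max_eq_left ht
    rw [hgdef]
    simp only [hm]
    rw [← Real.rpow_add (by positivity), Real.sqrt_eq_rpow]
    norm_num
  have step5 : ‖u‖ ^ 2 ≤ (⟪CFC.sqrt A x, x⟫_ℂ).re + Real.sqrt ε * ‖x‖ ^ 2 := by
    have hmono : cfc (fun t => g t * g t) A ≤
        cfc (fun t => Real.sqrt t + Real.sqrt ε) A := by
      apply cfc_mono (hf := (hgc.mul hgc).continuousOn)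
        (hg := (Real.continuous_sqrt.add continuous_const).continuousOn)
      intro t ht
      have ht0 : 0 ≤ t := spectrum_nonneg_of_nonneg hA0 ht
      show g t * g t ≤ Real.sqrt t + Real.sqrt ε
      rw [hgg t ht0]
      exact sqrt_add_le t ht0
    have hsplit : cfc (fun t => Real.sqrt t + Real.sqrt ε) A
        = CFC.sqrt A + Real.sqrt ε • (1 : H →L[ℂ] H) := by
      rw [cfc_add A _ _ (Real.continuous_sqrt.continuousOn) (continuousOn_const),
        aux_sqrt_eq_real_cfc hA0, cfc_const (Real.sqrt ε) A hAsa,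
        Algebra.algebraMap_eq_smul_one]
    have hre := aux_inner_re_mono hmono x
    rw [hsplit] at hre
    have hone : (⟪(CFC.sqrt A + Real.sqrt ε • (1 : H →L[ℂ] H)) x, x⟫_ℂ).re
        = (⟪CFC.sqrt A x, x⟫_ℂ).re + Real.sqrt ε * ‖x‖ ^ 2 := by
      have hsm : ⟪Real.sqrt ε • x, x⟫_ℂ = (Real.sqrt ε : ℂ) * ⟪x, x⟫_ℂ := by
        rw [RCLike.real_smul_eq_coe_smul (K := ℂ), inner_smul_left, RCLike.conj_ofReal]
        rfl
      rw [add_apply, inner_add_left, smul_apply, ContinuousLinearMap.one_apply, Complex.add_re, hsm,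
        Complex.re_ofReal_mul]
      congr 1
      rw [show (⟪x, x⟫_ℂ).re = RCLike.re ⟪x, x⟫_ℂ from rfl, @inner_self_eq_norm_sq ℂ]
    rw [step4]
    rw [hone] at hre
    exact hre
  -- step 6 : ‖T† (E y)‖ ^ 2
  set w := adjoint T (E y) with hw
  set k : ℝ → ℝ := fun t => f t * (t * f t) with hk
  have step6 : ‖w‖ ^ 2 = (⟪cfc k B y, y⟫_ℂ).re := by
    have e1 : ⟪w, w⟫_ℂ = ⟪E y, B (E y)⟫_ℂ := by
      rw [hw, adjoint_inner_left, hB, ContinuousLinearMap.mul_apply]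
    have e2 : ⟪E y, B (E y)⟫_ℂ = ⟪y, E (B (E y))⟫_ℂ := hEsym y (B (E y))
    have e3 : cfc k B y = E (B (E y)) := by
      rw [hk, cfc_mul f (fun t => t * f t) B hfc.continuousOn
          ((continuous_id.mul hfc).continuousOn),
        cfc_mul (fun t => t) f B continuous_id.continuousOn hfc.continuousOn,
        cfc_id' ℝ B hBsa, ← hE, ContinuousLinearMap.mul_apply, ContinuousLinearMap.mul_apply]
    have h4 : ⟪w, w⟫_ℂ = ⟪y, cfc k B y⟫_ℂ := by rw [e1, e2, e3]
    rw [show (⟪cfc k B y, y⟫_ℂ).re = RCLike.re ⟪cfc k B y, y⟫_ℂ from rfl, inner_re_symm,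
      ← h4]
    exact (inner_self_eq_norm_sq (𝕜 := ℂ) w).symm
  -- step 7 : bound ‖w‖^2
  have step7 : ‖w‖ ^ 2 ≤ (⟪CFC.sqrt B y, y⟫_ℂ).re := by
    have hmono : cfc k B ≤ cfc Real.sqrt B := by
      apply cfc_mono (hf := (hfc.mul (continuous_id'.mul hfc)).continuousOn)
        (hg := Real.continuous_sqrt.continuousOn)
      intro t ht

      have ht0 : 0 ≤ t := spectrum_nonneg_of_nonneg hB0 ht
      have hm : max t 0 = t := max_eq_left ht0
      have hgt : g t * g t = Real.sqrt (t + ε) := hgg t ht0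
      have hsp : 0 < Real.sqrt (t + ε) := Real.sqrt_pos.mpr (by positivity)
      have hkt : f t * (t * f t) = t / Real.sqrt (t + ε) := by
        rw [hfdef, ← hgt]
        field_simp
      show f t * (t * f t) ≤ Real.sqrt t
      rw [hkt, div_le_iff₀ hsp]
      have h1 : Real.sqrt t * Real.sqrt t ≤ Real.sqrt t * Real.sqrt (t + ε) :=
        mul_le_mul_of_nonneg_left (Real.sqrt_le_sqrt (by linarith)) (Real.sqrt_nonneg t)
      nlinarith [Real.sq_sqrt ht0]
    have h5 := aux_inner_re_mono hmono y
    rw [← aux_sqrt_eq_real_cfc hB0] at h5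
    rw [step6]
    exact h5
  -- conclusion
  have hb0 : 0 ≤ (⟪CFC.sqrt B y, y⟫_ℂ).re := le_trans (by positivity) step7
  have hu2 : ‖u‖ ^ 2 ≤ (⟪CFC.sqrt A x, x⟫_ℂ).re + Real.sqrt ε * ‖x‖ ^ 2 := step5
  calc ‖(⟪T x, y⟫_ℂ)‖ ^ 2 ≤ (‖u‖ * ‖w‖) ^ 2 := by
        apply pow_le_pow_left₀ (norm_nonneg _) ?_
        exact step3
    _ = ‖u‖ ^ 2 * ‖w‖ ^ 2 := by ring
    _ ≤ ((⟪CFC.sqrt A x, x⟫_ℂ).re + Real.sqrt ε * ‖x‖ ^ 2) * (⟪CFC.sqrt B y, y⟫_ℂ).re := by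
        apply mul_le_mul hu2 step7 (by positivity) (le_trans (by positivity) hu2)

end Aux

/-- The operator matrix `[[|T|, T†], [T, |T*|]]` is positive:
`⟨|T| x, x⟩ + 2 Re ⟨T x, y⟩ + ⟨|T*| y, y⟩ ≥ 0` for all `x, y`. -/
theorem opmatrix_positive {H : Type*} [NormedAddCommGroup H] [InnerProductSpace ℂ H]
    [CompleteSpace H] (T : H →L[ℂ] H) (x y : H) :
    0 ≤ (⟪CFC.sqrt (adjoint T * T) x, x⟫_ℂ).re + 2 * (⟪T x, y⟫_ℂ).re +
        (⟪CFC.sqrt (T * adjoint T) y, y⟫_ℂ).re := by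
  set a := (⟪CFC.sqrt (adjoint T * T) x, x⟫_ℂ).re with ha_def
  set b := (⟪CFC.sqrt (T * adjoint T) y, y⟫_ℂ).re with hb_def
  set c := (⟪T x, y⟫_ℂ).re with hc_def
  have ha0 : 0 ≤ a := by
    have h := (nonneg_iff_isPositive _).mp
      (CFC.sqrt_nonneg (a := adjoint T * T)) |>.inner_nonneg_left x
    have h' := (Complex.le_def.mp h).1
    rw [Complex.zero_re] at h'
    exact h'
  have hb0 : 0 ≤ b := by
    have h := (nonneg_iff_isPositive _).mp
      (CFC.sqrt_nonneg (a := T * adjoint T)) |>.inner_nonneg_left y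
    have h' := (Complex.le_def.mp h).1
    rw [Complex.zero_re] at h'
    exact h'
  have hab : c ^ 2 ≤ a * b := by
    apply le_of_forall_pos_le_add
    intro δ hδ
    set s : ℝ := δ / (‖x‖ ^ 2 * b + 1) with hs_def
    have hs : 0 < s := by positivity
    have key := aux_key_ineq T x y (ε := s ^ 2) (by positivity)
    rw [Real.sqrt_sq hs.le] at key
    have hn : ‖(⟪T x, y⟫_ℂ)‖ ^ 2 = c ^ 2 + (⟪T x, y⟫_ℂ).im ^ 2 := by
      rw [Complex.sq_norm, Complex.normSq_apply]
      ring
    have hsD : s * (‖x‖ ^ 2 * b) ≤ δ := by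
      rw [hs_def, div_mul_eq_mul_div, div_le_iff₀ (by positivity)]
      nlinarith [sq_nonneg ‖x‖]
    nlinarith [sq_nonneg ((⟪T x, y⟫_ℂ).im)]
  nlinarith [sq_nonneg (a - b), sq_nonneg (a + b + 2*c)]
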